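/- Let p ≥ q ≥ 2 be integers and let Z1 = Q_p and Z2 = Q_q be the modified 2^p-ary and 2^q-ary QAM constellations. Then for every real α > 0, the minimum, over all pairs (y1, y2), (ŷ1, ŷ2) ∈ Z1 × Z2 with (y1, y2) ≠ (ŷ1, ŷ2), of α²(|y1 − ŷ1|² + |y2 − ŷ2|²) / ((1 + α²(|y1|² + |y2|²))·(1 + α²(|ŷ1|² + |ŷ2|²))) equals 4α² / ((1 + α²(E(p) + E(q)))·(1 + α²(E(p) + E_s(q)))). -/

import Mathlib

/-- The modified `2^K`-ary QAM constellation. -/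
noncomputable def modQAM (K : ℕ) : Set ℂ :=
  if K = 3 then
    ({1 + 3 * Complex.I, 1 + Complex.I, 3 - Complex.I, 1 - Complex.I,
      -1 - 3 * Complex.I, -1 - Complex.I, -3 + Complex.I, -1 + Complex.I} : Set ℂ)
  else if K % 2 = 0 then
    {z | ∃ m n : ℤ, -(2 : ℤ) ^ ((K - 2) / 2) + 1 ≤ m ∧ m ≤ (2 : ℤ) ^ ((K - 2) / 2) ∧
      -(2 : ℤ) ^ ((K - 2) / 2) + 1 ≤ n ∧ n ≤ (2 : ℤ) ^ ((K - 2) / 2) ∧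
      z = (2 * (m : ℂ) - 1) + (2 * (n : ℂ) - 1) * Complex.I}
  else
    {z | ∃ m n : ℤ, -(3 * (2 : ℤ) ^ ((K - 5) / 2)) + 1 ≤ m ∧ m ≤ 3 * (2 : ℤ) ^ ((K - 5) / 2) ∧
      -(2 : ℤ) ^ ((K - 3) / 2) + 1 ≤ n ∧ n ≤ (2 : ℤ) ^ ((K - 3) / 2) ∧
      z = (2 * (m : ℂ) - 1) + (2 * (n : ℂ) - 1) * Complex.I} ∪
    {z | ∃ m n : ℤ, -(2 : ℤ) ^ ((K - 3) / 2) + 1 ≤ m ∧ m ≤ (2 : ℤ) ^ ((K - 3) / 2) ∧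
      -(3 * (2 : ℤ) ^ ((K - 5) / 2)) + 1 ≤ n ∧ n ≤ 3 * (2 : ℤ) ^ ((K - 5) / 2) ∧
      z = (2 * (m : ℂ) - 1) + (2 * (n : ℂ) - 1) * Complex.I}

/-- `Eng K` is the largest squared modulus of a point of the modified
`2^K`-ary QAM constellation. -/
noncomputable def Eng (K : ℕ) : ℝ :=
  if K = 2 then 2
  else if K = 3 then 10
  else if K % 2 = 0 then 2 * ((2 : ℝ) ^ (K / 2) - 1) ^ 2
  else ((2 : ℝ) ^ ((K - 1) / 2) - 1) ^ 2 + (3 * (2 : ℝ) ^ ((K - 3) / 2) - 1) ^ 2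

/-- `EngS K` is the larger squared modulus among the nearest neighbors of a
largest-energy corner point of the modified `2^K`-ary QAM constellation
(with the convention `EngS 2 = EngS 3 = 2`). -/
noncomputable def EngS (K : ℕ) : ℝ :=
  if K = 2 then 2
  else if K = 3 then 2
  else if K % 2 = 0 then ((2 : ℝ) ^ (K / 2) - 1) ^ 2 + ((2 : ℝ) ^ (K / 2) - 3) ^ 2
  else ((2 : ℝ) ^ ((K - 1) / 2) - 3) ^ 2 + (3 * (2 : ℝ) ^ ((K - 3) / 2) - 1) ^ 2

/-! ### Auxiliary machinery -/

def qA (K : ℕ) : ℤ := if K = 3 then 3 else if K % 2 = 0 then 2^(K/2) - 1 else 3 * 2^((K-3)/2) - 1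
def qB (K : ℕ) : ℤ := if K = 3 then 1 else if K % 2 = 0 then 2^(K/2) - 1 else 2^((K-1)/2) - 1

lemma absSq_int (a b : ℤ) :
    ‖(a : ℂ) + (b : ℂ) * Complex.I‖ ^ 2 = ((a ^ 2 + b ^ 2 : ℤ) : ℝ) := by
  rw [Complex.sq_norm, Complex.normSq_apply]
  simp only [Complex.add_re, Complex.add_im, Complex.intCast_re, Complex.intCast_im,
    Complex.mul_re, Complex.mul_im, Complex.I_re, Complex.I_im]
  push_cast
  ring

lemma coord_inj (a b a' b' : ℤ)
    (h : (a : ℂ) + (b : ℂ) * Complex.I = (a' : ℂ) + (b' : ℂ) * Complex.I) :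
    a = a' ∧ b = b' := by
  have h1 := congrArg Complex.re h
  have h2 := congrArg Complex.im h
  simp at h1 h2
  exact ⟨by exact_mod_cast h1, by exact_mod_cast h2⟩

lemma qfacts {K : ℕ} (hK : 2 ≤ K) :
    qA K % 2 = 1 ∧ qB K % 2 = 1 ∧ 1 ≤ qB K ∧ qB K ≤ qA K := by
  rcases eq_or_ne K 3 with rfl | h3
  · norm_num [qA, qB]
  rcases Nat.even_or_odd K with hE | hO
  · have hm : K % 2 = 0 := Nat.even_iff.mp hE
    have he : (2:ℤ)^(K/2) = 2 * 2^(K/2 - 1) := by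
      rw [← pow_succ']; congr 1; omega
    have hx : (0:ℤ) < 2^(K/2 - 1) := by positivity
    simp only [qA, qB, if_neg h3, if_pos hm]
    omega
  · have hm : ¬ (K % 2 = 0) := by
      have := Nat.odd_iff.mp hO; omega
    have hK5 : 5 ≤ K := by
      have := Nat.odd_iff.mp hO; omega
    have h1 : (2:ℤ)^((K-1)/2) = 2 * (2 * 2^((K-5)/2)) := by
      rw [← pow_succ', ← pow_succ']; congr 1; omega
    have h2 : (2:ℤ)^((K-3)/2) = 2 * 2^((K-5)/2) := by
      rw [← pow_succ']; congr 1; omega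
    have hx : (0:ℤ) < 2^((K-5)/2) := by positivity
    simp only [qA, qB, if_neg h3, if_neg hm]
    omega

lemma core {A B x y : ℤ} (hA : A % 2 = 1) (hB : B % 2 = 1) (hBA : B ≤ A) (h1 : 1 ≤ B)
    (hx : 1 ≤ x) (hb : (x ≤ A ∧ |y| ≤ B) ∨ (x ≤ B ∧ |y| ≤ A)) :
    (x-2)^2 + y^2 ≤ A^2 + (B-2)^2 := by
  rcases hb with ⟨hxA, hyB⟩ | ⟨hxB, hyA⟩
  · rw [abs_le] at hyB
    have hA13 : A = 1 ∨ 3 ≤ A := by omega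
    have hkey : (x-2)^2 ≤ (A-2)^2 := by
      rcases hA13 with rfl | hA3
      · have : x = 1 := by omega
        subst this; norm_num
      · nlinarith
    nlinarith
  · rw [abs_le] at hyA
    have hB13 : B = 1 ∨ 3 ≤ B := by omega
    have hkey : (x-2)^2 ≤ (B-2)^2 := by
      rcases hB13 with rfl | hB3
      · have : x = 1 := by omega
        subst this; norm_num
      · nlinarith
    nlinarith

lemma energy_le {A B a b : ℤ} (hb : (|a| ≤ A ∧ |b| ≤ B) ∨ (|a| ≤ B ∧ |b| ≤ A)) :
    a^2 + b^2 ≤ A^2 + B^2 := by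
  rcases hb with ⟨h1, h2⟩ | ⟨h1, h2⟩ <;> rw [abs_le] at h1 h2 <;> nlinarith [abs_nonneg a]

lemma neighbor_int {A B a b a' b' : ℤ} (hA : A % 2 = 1) (hB : B % 2 = 1)
    (h1 : 1 ≤ B) (hBA : B ≤ A)
    (ha : a % 2 = 1) (hb : b % 2 = 1) (ha' : a' % 2 = 1) (hb' : b' % 2 = 1)
    (hy : (|a| ≤ A ∧ |b| ≤ B) ∨ (|a| ≤ B ∧ |b| ≤ A))
    (hz : (|a'| ≤ A ∧ |b'| ≤ B) ∨ (|a'| ≤ B ∧ |b'| ≤ A))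
    (hd : (a-a')^2 + (b-b')^2 = 4) :
    (a^2+b^2 ≤ A^2+B^2 ∧ a'^2+b'^2 ≤ A^2+(B-2)^2) ∨
    (a^2+b^2 ≤ A^2+(B-2)^2 ∧ a'^2+b'^2 ≤ A^2+B^2) := by
  have hyE := energy_le hy
  have hzE := energy_le hz
  obtain ⟨c, hc⟩ : ∃ c, a - a' = 2*c := ⟨(a-a')/2, by omega⟩
  obtain ⟨e, he⟩ : ∃ e, b - b' = 2*e := ⟨(b-b')/2, by omega⟩
  have h4' : 4*(c^2 + e^2) = 4*1 := by
    linear_combination hd - (a - a' + 2*c) * hc - (b - b' + 2*e) * he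
  have h4 : c^2 + e^2 = 1 := by linarith
  have hc1a : -1 ≤ c := by nlinarith [sq_nonneg e, sq_nonneg (c+1)]
  have hc1b : c ≤ 1 := by nlinarith [sq_nonneg e, sq_nonneg (c-1)]
  have he1a : -1 ≤ e := by nlinarith [sq_nonneg c, sq_nonneg (e+1)]
  have he1b : e ≤ 1 := by nlinarith [sq_nonneg c, sq_nonneg (e-1)]
  have hcases : (a = a' + 2 ∧ b = b') ∨ (a' = a + 2 ∧ b = b') ∨
      (a = a' ∧ b = b' + 2) ∨ (a = a' ∧ b' = b + 2) := by
    interval_cases c <;> interval_cases e <;> norm_num at h4 <;> omega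
  clear hd hc he h4 h4' hc1a hc1b he1a he1b
  rcases hcases with ⟨h5, h6⟩ | ⟨h5, h6⟩ | ⟨h5, h6⟩ | ⟨h5, h6⟩
  · rcases le_or_gt 1 a with hs | hs
    · left
      refine ⟨hyE, ?_⟩
      have hcore := core hA hB hBA h1 hs (x := a) (y := b) (by
        rcases hy with ⟨u, v⟩ | ⟨u, v⟩
        · exact Or.inl ⟨(abs_le.mp u).2, v⟩
        · exact Or.inr ⟨(abs_le.mp u).2, v⟩)
      have heq : a'^2 + b'^2 = (a-2)^2 + b^2 := by rw [h5, h6]; ring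
      linarith
    · right
      refine ⟨?_, hzE⟩
      have hx : 1 ≤ -a' := by omega
      have hcore := core hA hB hBA h1 hx (x := -a') (y := b') (by
        rcases hz with ⟨u, v⟩ | ⟨u, v⟩
        · exact Or.inl ⟨by linarith [(abs_le.mp u).1], v⟩
        · exact Or.inr ⟨by linarith [(abs_le.mp u).1], v⟩)
      have heq : a^2 + b^2 = (-a'-2)^2 + b'^2 := by rw [h5, h6]; ring
      linarith
  · rcases le_or_gt 1 a' with hs | hs
    · right
      refine ⟨?_, hzE⟩
      have hcore := core hA hB hBA h1 hs (x := a') (y := b') (by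
        rcases hz with ⟨u, v⟩ | ⟨u, v⟩
        · exact Or.inl ⟨(abs_le.mp u).2, v⟩
        · exact Or.inr ⟨(abs_le.mp u).2, v⟩)
      have heq : a^2 + b^2 = (a'-2)^2 + b'^2 := by rw [h5, h6]; ring
      linarith
    · left
      refine ⟨hyE, ?_⟩
      have hx : 1 ≤ -a := by omega
      have hcore := core hA hB hBA h1 hx (x := -a) (y := b) (by
        rcases hy with ⟨u, v⟩ | ⟨u, v⟩
        · exact Or.inl ⟨by linarith [(abs_le.mp u).1], v⟩
        · exact Or.inr ⟨by linarith [(abs_le.mp u).1], v⟩)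
      have heq : a'^2 + b'^2 = (-a-2)^2 + b^2 := by rw [h5, h6]; ring
      linarith
  · rcases le_or_gt 1 b with hs | hs
    · left
      refine ⟨hyE, ?_⟩
      have hcore := core hA hB hBA h1 hs (x := b) (y := a) (by
        rcases hy with ⟨u, v⟩ | ⟨u, v⟩
        · exact Or.inr ⟨(abs_le.mp v).2, u⟩
        · exact Or.inl ⟨(abs_le.mp v).2, u⟩)
      have heq : a'^2 + b'^2 = (b-2)^2 + a^2 := by rw [h5, h6]; ring
      linarith
    · right
      refine ⟨?_, hzE⟩
      have hx : 1 ≤ -b' := by omega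
      have hcore := core hA hB hBA h1 hx (x := -b') (y := a') (by
        rcases hz with ⟨u, v⟩ | ⟨u, v⟩
        · exact Or.inr ⟨by linarith [(abs_le.mp v).1], u⟩
        · exact Or.inl ⟨by linarith [(abs_le.mp v).1], u⟩)
      have heq : a^2 + b^2 = (-b'-2)^2 + a'^2 := by rw [h5, h6]; ring
      linarith
  · rcases le_or_gt 1 b' with hs | hs
    · right
      refine ⟨?_, hzE⟩
      have hcore := core hA hB hBA h1 hs (x := b') (y := a') (by
        rcases hz with ⟨u, v⟩ | ⟨u, v⟩
        · exact Or.inr ⟨(abs_le.mp v).2, u⟩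
        · exact Or.inl ⟨(abs_le.mp v).2, u⟩)
      have heq : a^2 + b^2 = (b'-2)^2 + a'^2 := by rw [h5, h6]; ring
      linarith
    · left
      refine ⟨hyE, ?_⟩
      have hx : 1 ≤ -b := by omega
      have hcore := core hA hB hBA h1 hx (x := -b) (y := a) (by
        rcases hy with ⟨u, v⟩ | ⟨u, v⟩
        · exact Or.inr ⟨by linarith [(abs_le.mp v).1], u⟩
        · exact Or.inl ⟨by linarith [(abs_le.mp v).1], u⟩)
      have heq : a'^2 + b'^2 = (-b-2)^2 + a^2 := by rw [← h5, h6]; ring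
      linarith

lemma mem_coords {K : ℕ} (hK : 2 ≤ K) {z : ℂ} (hz : z ∈ modQAM K) :
    ∃ a b : ℤ, a % 2 = 1 ∧ b % 2 = 1 ∧
      ((|a| ≤ qA K ∧ |b| ≤ qB K) ∨ (|a| ≤ qB K ∧ |b| ≤ qA K)) ∧
      z = (a : ℂ) + (b : ℂ) * Complex.I := by
  rcases eq_or_ne K 3 with rfl | h3
  · simp only [modQAM, if_pos rfl, Set.mem_insert_iff, Set.mem_singleton_iff] at hz
    rcases hz with rfl | rfl | rfl | rfl | rfl | rfl | rfl | rfl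
    · exact ⟨1, 3, by decide, by decide, by decide, by push_cast; ring⟩
    · exact ⟨1, 1, by decide, by decide, by decide, by push_cast; ring⟩
    · exact ⟨3, -1, by decide, by decide, by decide, by push_cast; ring⟩
    · exact ⟨1, -1, by decide, by decide, by decide, by push_cast; ring⟩
    · exact ⟨-1, -3, by decide, by decide, by decide, by push_cast; ring⟩
    · exact ⟨-1, -1, by decide, by decide, by decide, by push_cast; ring⟩
    · exact ⟨-3, 1, by decide, by decide, by decide, by push_cast; ring⟩
    · exact ⟨-1, 1, by decide, by decide, by decide, by push_cast; ring⟩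
  rcases Nat.even_or_odd K with hE | hO
  · have hm : K % 2 = 0 := Nat.even_iff.mp hE
    have he : (2:ℤ)^(K/2) = 2 * 2^((K-2)/2) := by
      rw [← pow_succ']; congr 1; omega
    simp only [modQAM, if_neg h3, if_pos hm, Set.mem_setOf_eq] at hz
    obtain ⟨m, n, h1, h2, h3', h4, rfl⟩ := hz
    refine ⟨2*m-1, 2*n-1, by omega, by omega, ?_, by push_cast; ring⟩
    simp only [qA, qB, if_neg h3, if_pos hm]
    left
    constructor <;> rw [abs_le] <;> omega
  · have hm : ¬ (K % 2 = 0) := by have := Nat.odd_iff.mp hO; omega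
    have hK5 : 5 ≤ K := by have := Nat.odd_iff.mp hO; omega
    have h1 : (2:ℤ)^((K-1)/2) = 2 * 2^((K-3)/2) := by
      rw [← pow_succ']; congr 1; omega
    have h2 : (2:ℤ)^((K-3)/2) = 2 * 2^((K-5)/2) := by
      rw [← pow_succ']; congr 1; omega
    simp only [modQAM, if_neg h3, if_neg hm, Set.mem_union, Set.mem_setOf_eq] at hz
    rcases hz with ⟨m, n, hm1, hm2, hn1, hn2, rfl⟩ | ⟨m, n, hm1, hm2, hn1, hn2, rfl⟩
    · refine ⟨2*m-1, 2*n-1, by omega, by omega, ?_, by push_cast; ring⟩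
      simp only [qA, qB, if_neg h3, if_neg hm]
      left
      constructor <;> rw [abs_le] <;> omega
    · refine ⟨2*m-1, 2*n-1, by omega, by omega, ?_, by push_cast; ring⟩
      simp only [qA, qB, if_neg h3, if_neg hm]
      right
      constructor <;> rw [abs_le] <;> omega

lemma coords_mem {K : ℕ} (hK : 2 ≤ K) (h3 : K ≠ 3) {a b : ℤ} (ha : a % 2 = 1) (hb : b % 2 = 1)
    (hbd : (|a| ≤ qA K ∧ |b| ≤ qB K) ∨ (|a| ≤ qB K ∧ |b| ≤ qA K)) :
    ((a : ℂ) + (b : ℂ) * Complex.I) ∈ modQAM K := by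
  rcases Nat.even_or_odd K with hE | hO
  · have hm : K % 2 = 0 := Nat.even_iff.mp hE
    have he : (2:ℤ)^(K/2) = 2 * 2^((K-2)/2) := by
      rw [← pow_succ']; congr 1; omega
    simp only [qA, qB, if_neg h3, if_pos hm] at hbd
    simp only [modQAM, if_neg h3, if_pos hm, Set.mem_setOf_eq]
    refine ⟨(a+1)/2, (b+1)/2, ?_, ?_, ?_, ?_, ?_⟩
    · rcases hbd with ⟨u, v⟩ | ⟨u, v⟩ <;> rw [abs_le] at u <;> omega
    · rcases hbd with ⟨u, v⟩ | ⟨u, v⟩ <;> rw [abs_le] at u <;> omega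
    · rcases hbd with ⟨u, v⟩ | ⟨u, v⟩ <;> rw [abs_le] at v <;> omega
    · rcases hbd with ⟨u, v⟩ | ⟨u, v⟩ <;> rw [abs_le] at v <;> omega
    · have ea' : (a : ℂ) = 2 * ((((a+1)/2 : ℤ)) : ℂ) - 1 := by
        exact_mod_cast congrArg (Int.cast : ℤ → ℂ) (by omega : a = 2 * ((a+1)/2) - 1)
      have eb' : (b : ℂ) = 2 * ((((b+1)/2 : ℤ)) : ℂ) - 1 := by
        exact_mod_cast congrArg (Int.cast : ℤ → ℂ) (by omega : b = 2 * ((b+1)/2) - 1)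
      rw [ea', eb']
  · have hm : ¬ (K % 2 = 0) := by have := Nat.odd_iff.mp hO; omega
    have hK5 : 5 ≤ K := by have := Nat.odd_iff.mp hO; omega
    have h1 : (2:ℤ)^((K-1)/2) = 2 * 2^((K-3)/2) := by
      rw [← pow_succ']; congr 1; omega
    have h2 : (2:ℤ)^((K-3)/2) = 2 * 2^((K-5)/2) := by
      rw [← pow_succ']; congr 1; omega
    simp only [qA, qB, if_neg h3, if_neg hm] at hbd
    simp only [modQAM, if_neg h3, if_neg hm, Set.mem_union, Set.mem_setOf_eq]
    have ea' : (a : ℂ) = 2 * ((((a+1)/2 : ℤ)) : ℂ) - 1 := by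
      exact_mod_cast congrArg (Int.cast : ℤ → ℂ) (by omega : a = 2 * ((a+1)/2) - 1)
    have eb' : (b : ℂ) = 2 * ((((b+1)/2 : ℤ)) : ℂ) - 1 := by
      exact_mod_cast congrArg (Int.cast : ℤ → ℂ) (by omega : b = 2 * ((b+1)/2) - 1)
    have hzeq : (a : ℂ) + (b : ℂ) * Complex.I
        = (2 * (((a+1)/2 : ℤ) : ℂ) - 1) + (2 * (((b+1)/2 : ℤ) : ℂ) - 1) * Complex.I := by
      rw [ea', eb']
    rcases hbd with ⟨u, v⟩ | ⟨u, v⟩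
    · left
      refine ⟨(a+1)/2, (b+1)/2, ?_, ?_, ?_, ?_, hzeq⟩ <;> rw [abs_le] at u v <;> omega
    · right
      refine ⟨(a+1)/2, (b+1)/2, ?_, ?_, ?_, ?_, hzeq⟩ <;> rw [abs_le] at u v <;> omega

lemma eng_eq {K : ℕ} (hK : 2 ≤ K) : Eng K = ((qA K ^ 2 + qB K ^ 2 : ℤ) : ℝ) := by
  rcases eq_or_ne K 2 with rfl | h2
  · norm_num [Eng, qA, qB]
  rcases eq_or_ne K 3 with rfl | h3
  · norm_num [Eng, qA, qB]
  rcases Nat.even_or_odd K with hE | hO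
  · have hm : K % 2 = 0 := Nat.even_iff.mp hE
    simp only [Eng, qA, qB, if_neg h2, if_neg h3, if_pos hm]
    push_cast
    ring
  · have hm : ¬ (K % 2 = 0) := by have := Nat.odd_iff.mp hO; omega
    simp only [Eng, qA, qB, if_neg h2, if_neg h3, if_neg hm]
    push_cast
    ring

lemma engS_eq {K : ℕ} (hK : 2 ≤ K) (h3 : K ≠ 3) :
    EngS K = ((qA K ^ 2 + (qB K - 2) ^ 2 : ℤ) : ℝ) := by
  rcases eq_or_ne K 2 with rfl | h2
  · norm_num [EngS, qA, qB]
  rcases Nat.even_or_odd K with hE | hO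
  · have hm : K % 2 = 0 := Nat.even_iff.mp hE
    simp only [EngS, qA, qB, if_neg h2, if_neg h3, if_pos hm]
    push_cast
    ring
  · have hm : ¬ (K % 2 = 0) := by have := Nat.odd_iff.mp hO; omega
    simp only [EngS, qA, qB, if_neg h2, if_neg h3, if_neg hm]
    push_cast
    ring

lemma engS_nonneg (K : ℕ) : 0 ≤ EngS K := by
  unfold EngS
  split_ifs <;> positivity

lemma eng_sub {K : ℕ} (hK : 2 ≤ K) (h3 : K ≠ 3) :
    Eng K - EngS K = 4 * (2:ℝ) ^ (K / 2) - 8 := by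
  rcases eq_or_ne K 2 with rfl | h2
  · norm_num [Eng, EngS]
  rcases Nat.even_or_odd K with hE | hO
  · have hm : K % 2 = 0 := Nat.even_iff.mp hE
    simp only [Eng, EngS, if_neg h2, if_neg h3, if_pos hm]
    ring
  · have hm : ¬ (K % 2 = 0) := by have := Nat.odd_iff.mp hO; omega
    have h12 : (K - 1) / 2 = K / 2 := by omega
    simp only [Eng, EngS, if_neg h2, if_neg h3, if_neg hm, h12]
    ring

lemma eng_mono {q p : ℕ} (hq : 2 ≤ q) (hqp : q ≤ p) :
    Eng q + EngS p ≤ Eng p + EngS q := by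
  have key : Eng q - EngS q ≤ Eng p - EngS p := by
    have pow_mono : ∀ m n : ℕ, m ≤ n → (2:ℝ)^m ≤ (2:ℝ)^n := fun m n h =>
      pow_le_pow_right₀ (by norm_num) h
    have h33 : Eng 3 - EngS 3 = 8 := by norm_num [Eng, EngS]
    rcases eq_or_ne q 3 with rfl | hq3
    · rcases eq_or_ne p 3 with rfl | hp3
      · exact le_refl _
      · rw [eng_sub (by omega) hp3, h33]
        have h4 : (2:ℝ)^2 ≤ (2:ℝ)^(p/2) := pow_mono 2 (p/2) (by omega)
        norm_num at h4
        linarith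
    · rcases eq_or_ne p 3 with rfl | hp3
      · have hq2 : q = 2 := by omega
        subst hq2
        rw [eng_sub (by omega) (by omega), h33]
        norm_num
      · rw [eng_sub hq hq3, eng_sub (by omega) hp3]
        have h4 : (2:ℝ)^(q/2) ≤ (2:ℝ)^(p/2) := pow_mono _ _ (by omega)
        linarith
  linarith

lemma energy_bound {K : ℕ} (hK : 2 ≤ K) {z : ℂ} (hz : z ∈ modQAM K) :
    ‖z‖ ^ 2 ≤ Eng K := by
  obtain ⟨a, b, ha, hb, hbd, rfl⟩ := mem_coords hK hz
  rw [absSq_int, eng_eq hK]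
  exact_mod_cast energy_le hbd

lemma dist_quant {K : ℕ} (hK : 2 ≤ K) {y z : ℂ} (hy : y ∈ modQAM K) (hz : z ∈ modQAM K) :
    ∃ k : ℤ, 0 ≤ k ∧ ‖y - z‖ ^ 2 = 4 * (k : ℝ) ∧ (k = 0 ↔ y = z) := by
  obtain ⟨a, b, ha, hb, hbd, rfl⟩ := mem_coords hK hy
  obtain ⟨a', b', ha', hb', hbd', rfl⟩ := mem_coords hK hz
  obtain ⟨c, hc⟩ : ∃ c, a - a' = 2*c := ⟨(a-a')/2, by omega⟩
  obtain ⟨e, he⟩ : ∃ e, b - b' = 2*e := ⟨(b-b')/2, by omega⟩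
  refine ⟨c^2 + e^2, by positivity, ?_, ?_, ?_⟩
  · have hsub : ((a:ℂ) + (b:ℂ)*Complex.I) - ((a':ℂ) + (b':ℂ)*Complex.I)
        = ((a - a' : ℤ) : ℂ) + ((b - b' : ℤ) : ℂ)*Complex.I := by push_cast; ring
    rw [hsub, absSq_int]
    have h4 : (a-a')^2 + (b-b')^2 = 4*(c^2+e^2) := by rw [hc, he]; ring
    rw [h4]
    push_cast
    ring
  · intro hk0
    have hc0 : c = 0 := by nlinarith [sq_nonneg c, sq_nonneg e]
    have he0 : e = 0 := by nlinarith [sq_nonneg c, sq_nonneg e]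
    have haa : a = a' := by omega
    have hbb : b = b' := by omega
    rw [haa, hbb]
  · intro heq
    obtain ⟨h1, h2⟩ := coord_inj _ _ _ _ heq
    have hc0 : c = 0 := by omega
    have he0 : e = 0 := by omega
    rw [hc0, he0]
    ring

lemma neighbor3 {y z : ℂ} (hy : y ∈ modQAM 3) (hz : z ∈ modQAM 3)
    (hd : ‖y - z‖ ^ 2 = 4) :
    (‖y‖ ^ 2 ≤ 10 ∧ ‖z‖ ^ 2 ≤ 2) ∨
    (‖y‖ ^ 2 ≤ 2 ∧ ‖z‖ ^ 2 ≤ 10) := by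
  simp only [modQAM, if_pos rfl, Set.mem_insert_iff, Set.mem_singleton_iff] at hy hz
  rcases hy with rfl | rfl | rfl | rfl | rfl | rfl | rfl | rfl <;>
    rcases hz with rfl | rfl | rfl | rfl | rfl | rfl | rfl | rfl <;>
    first
      | (left; constructor <;> (rw [Complex.sq_norm]; norm_num [Complex.normSq_apply]); done)
      | (right; constructor <;> (rw [Complex.sq_norm]; norm_num [Complex.normSq_apply]); done)
      | (exfalso; rw [Complex.sq_norm] at hd; norm_num [Complex.normSq_apply] at hd; done)

lemma neighbor_energy {K : ℕ} (hK : 2 ≤ K) {y z : ℂ} (hy : y ∈ modQAM K) (hz : z ∈ modQAM K)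
    (hd : ‖y - z‖ ^ 2 = 4) :
    (‖y‖ ^ 2 ≤ Eng K ∧ ‖z‖ ^ 2 ≤ EngS K) ∨
    (‖y‖ ^ 2 ≤ EngS K ∧ ‖z‖ ^ 2 ≤ Eng K) := by
  rcases eq_or_ne K 3 with rfl | h3
  · have h1 : Eng 3 = 10 := by norm_num [Eng]
    have h2 : EngS 3 = 2 := by norm_num [EngS]
    rw [h1, h2]
    exact neighbor3 hy hz hd
  · obtain ⟨hA, hB, h1, hBA⟩ := qfacts hK
    obtain ⟨a, b, ha, hb, hbd, rfl⟩ := mem_coords hK hy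
    obtain ⟨a', b', ha', hb', hbd', rfl⟩ := mem_coords hK hz
    have hsub : ((a:ℂ) + (b:ℂ)*Complex.I) - ((a':ℂ) + (b':ℂ)*Complex.I)
        = ((a - a' : ℤ) : ℂ) + ((b - b' : ℤ) : ℂ)*Complex.I := by push_cast; ring
    rw [hsub, absSq_int] at hd
    have hdint : (a-a')^2 + (b-b')^2 = 4 := by exact_mod_cast hd
    have hmain := neighbor_int hA hB h1 hBA ha hb ha' hb' hbd hbd' hdint
    rw [absSq_int, absSq_int, eng_eq hK, engS_eq hK h3]
    rcases hmain with ⟨u, v⟩ | ⟨u, v⟩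
    · left; exact ⟨by exact_mod_cast u, by exact_mod_cast v⟩
    · right; exact ⟨by exact_mod_cast u, by exact_mod_cast v⟩

lemma corner {K : ℕ} (hK : 2 ≤ K) :
    ∃ y ∈ modQAM K, ∃ z ∈ modQAM K, ‖y‖ ^ 2 = Eng K ∧
      ‖z‖ ^ 2 = EngS K ∧ ‖y - z‖ ^ 2 = 4 := by
  rcases eq_or_ne K 3 with rfl | h3
  · refine ⟨1 + 3*Complex.I, ?_, 1 + Complex.I, ?_, ?_, ?_, ?_⟩
    · simp [modQAM]
    · simp [modQAM]
    · rw [Complex.sq_norm]; norm_num [Complex.normSq_apply, Eng]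
    · rw [Complex.sq_norm]; norm_num [Complex.normSq_apply, EngS]
    · rw [Complex.sq_norm]; norm_num [Complex.normSq_apply]
  · obtain ⟨hA, hB, h1, hBA⟩ := qfacts hK
    refine ⟨(qA K : ℂ) + (qB K : ℂ)*Complex.I, ?_,
            (qA K : ℂ) + ((qB K - 2 : ℤ) : ℂ)*Complex.I, ?_, ?_, ?_, ?_⟩
    · exact coords_mem hK h3 hA hB (Or.inl ⟨by rw [abs_le]; omega, by rw [abs_le]; omega⟩)
    · exact coords_mem hK h3 hA (by omega)
        (Or.inl ⟨by rw [abs_le]; omega, by rw [abs_le]; omega⟩)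
    · rw [absSq_int, eng_eq hK]
    · rw [absSq_int, engS_eq hK h3]
    · have hsub : ((qA K : ℂ) + (qB K : ℂ)*Complex.I)
          - ((qA K : ℂ) + ((qB K - 2 : ℤ) : ℂ)*Complex.I)
          = ((0 : ℤ) : ℂ) + ((2 : ℤ) : ℂ)*Complex.I := by push_cast; ring
      rw [hsub, absSq_int]
      norm_num

/-- For the pair of modified QAM constellations `Z₁ = Q_p` and `Z₂ = Q_q`
(`p ≥ q ≥ 2`) and every `α > 0`, the minimum over distinct pairs
`(y₁, y₂) ≠ (ŷ₁, ŷ₂)` in `Z₁ × Z₂` of the coding-gain function equals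
`4α² / ((1 + α²(E(p) + E(q))) (1 + α²(E(p) + E_s(q))))`. -/
theorem coding_gain_min_over_qam (p q : ℕ) (hq : 2 ≤ q) (hqp : q ≤ p)
    (α : ℝ) (hα : 0 < α) :
    IsLeast
      {g : ℝ | ∃ y1 ∈ modQAM p, ∃ y2 ∈ modQAM q, ∃ z1 ∈ modQAM p, ∃ z2 ∈ modQAM q,
        (y1, y2) ≠ (z1, z2) ∧
        g = α ^ 2 * (‖y1 - z1‖ ^ 2 + ‖y2 - z2‖ ^ 2) /
            ((1 + α ^ 2 * (‖y1‖ ^ 2 + ‖y2‖ ^ 2)) *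
              (1 + α ^ 2 * (‖z1‖ ^ 2 + ‖z2‖ ^ 2)))}
      (4 * α ^ 2 /
        ((1 + α ^ 2 * (Eng p + Eng q)) * (1 + α ^ 2 * (Eng p + EngS q)))) := by
  have hp : 2 ≤ p := hq.trans hqp
  have ht : (0:ℝ) < α ^ 2 := by positivity
  constructor
  · -- membership: the minimum is attained
    obtain ⟨cp, hcp, _, _, hcpE, -, -⟩ := corner hp
    obtain ⟨cq, hcq, cq', hcq', hcqE, hcqE', hcqd⟩ := corner hq
    refine ⟨cp, hcp, cq, hcq, cp, hcp, cq', hcq', ?_, ?_⟩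
    · intro hpair
      have h2 : cq = cq' := congrArg Prod.snd hpair
      rw [h2, sub_self] at hcqd
      simp at hcqd
    · rw [sub_self, norm_zero, hcpE, hcqE, hcqE', hcqd]
      ring
  · -- lower bound
    rintro g ⟨y1, hy1, y2, hy2, z1, hz1, z2, hz2, hne, rfl⟩
    have hb1 : ‖y1‖ ^ 2 ≤ Eng p := energy_bound hp hy1
    have hb2 : ‖y2‖ ^ 2 ≤ Eng q := energy_bound hq hy2
    have hb3 : ‖z1‖ ^ 2 ≤ Eng p := energy_bound hp hz1
    have hb4 : ‖z2‖ ^ 2 ≤ Eng q := energy_bound hq hz2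
    have hn1 : (0:ℝ) ≤ ‖y1‖ ^ 2 := by positivity
    have hn2 : (0:ℝ) ≤ ‖y2‖ ^ 2 := by positivity
    have hn3 : (0:ℝ) ≤ ‖z1‖ ^ 2 := by positivity
    have hn4 : (0:ℝ) ≤ ‖z2‖ ^ 2 := by positivity
    have hEp0 : 0 ≤ Eng p := hn1.trans hb1
    have hEq0 : 0 ≤ Eng q := hn2.trans hb2
    have hEsq0 := engS_nonneg q
    have hEsp0 := engS_nonneg p
    have hmono := eng_mono hq hqp
    obtain ⟨k1, hk10, hd1, hk1e⟩ := dist_quant hp hy1 hz1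
    obtain ⟨k2, hk20, hd2, hk2e⟩ := dist_quant hq hy2 hz2
    have hApos : (0:ℝ) < 1 + α ^ 2 * (Eng p + Eng q) := by
      have := mul_nonneg ht.le (add_nonneg hEp0 hEq0); linarith
    have hBpos : (0:ℝ) < 1 + α ^ 2 * (Eng p + EngS q) := by
      have := mul_nonneg ht.le (add_nonneg hEp0 hEsq0); linarith
    have hD1pos : (0:ℝ) < 1 + α ^ 2 * (‖y1‖ ^ 2 + ‖y2‖ ^ 2) := by
      have := mul_nonneg ht.le (add_nonneg hn1 hn2); linarith
    have hD2pos : (0:ℝ) < 1 + α ^ 2 * (‖z1‖ ^ 2 + ‖z2‖ ^ 2) := by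
      have := mul_nonneg ht.le (add_nonneg hn3 hn4); linarith
    rw [hd1, hd2, div_le_div_iff₀ (mul_pos hApos hBpos) (mul_pos hD1pos hD2pos)]
    have hknz : ¬ (k1 = 0 ∧ k2 = 0) := by
      rintro ⟨u1, u2⟩
      exact hne (by rw [hk1e.mp u1, hk2e.mp u2])
    have hD1A : 1 + α ^ 2 * (‖y1‖ ^ 2 + ‖y2‖ ^ 2)
        ≤ 1 + α ^ 2 * (Eng p + Eng q) := by
      have := mul_le_mul_of_nonneg_left (add_le_add hb1 hb2) ht.le; linarith
    have hD2A : 1 + α ^ 2 * (‖z1‖ ^ 2 + ‖z2‖ ^ 2)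
        ≤ 1 + α ^ 2 * (Eng p + Eng q) := by
      have := mul_le_mul_of_nonneg_left (add_le_add hb3 hb4) ht.le; linarith
    have hsplit : 2 ≤ k1 + k2 ∨ (k1 = 1 ∧ k2 = 0) ∨ (k1 = 0 ∧ k2 = 1) := by
      rcases eq_or_ne k1 0 with rfl | hk1n
      · rcases eq_or_ne k2 0 with rfl | hk2n
        · exact absurd ⟨rfl, rfl⟩ hknz
        · rcases eq_or_ne k2 1 with rfl | hk2n1
          · exact Or.inr (Or.inr ⟨rfl, rfl⟩)
          · exact Or.inl (by omega)
      · rcases eq_or_ne k2 0 with rfl | hk2n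
        · rcases eq_or_ne k1 1 with rfl | hk1n1
          · exact Or.inr (Or.inl ⟨rfl, rfl⟩)
          · exact Or.inl (by omega)
        · exact Or.inl (by omega)
    rcases hsplit with hbig | hcase
    · -- squared distance at least 8
      have hk8 : (8:ℝ) ≤ 4 * (k1:ℝ) + 4 * (k2:ℝ) := by
        have : (2:ℝ) ≤ (k1:ℝ) + (k2:ℝ) := by exact_mod_cast hbig
        linarith
      have hA2B : 1 + α ^ 2 * (Eng p + Eng q) ≤ 2 * (1 + α ^ 2 * (Eng p + EngS q)) := by
        have h1 : (0:ℝ) ≤ Eng p + 2 * EngS q - Eng q := by linarith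
        have := mul_nonneg ht.le h1
        nlinarith [mul_nonneg ht.le hEsq0]
      have hprod : (1 + α ^ 2 * (‖y1‖ ^ 2 + ‖y2‖ ^ 2)) *
          (1 + α ^ 2 * (‖z1‖ ^ 2 + ‖z2‖ ^ 2))
          ≤ (1 + α ^ 2 * (Eng p + Eng q)) * (1 + α ^ 2 * (Eng p + Eng q)) :=
        mul_le_mul hD1A hD2A hD2pos.le hApos.le
      have c2 : (1 + α ^ 2 * (Eng p + Eng q)) * (1 + α ^ 2 * (Eng p + Eng q))
          ≤ 2 * ((1 + α ^ 2 * (Eng p + Eng q)) * (1 + α ^ 2 * (Eng p + EngS q))) := by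
        have := mul_le_mul_of_nonneg_left hA2B hApos.le
        linarith
      have d1 := mul_le_mul_of_nonneg_left (hprod.trans c2) (by positivity : (0:ℝ) ≤ 4 * α ^ 2)
      have d2 := mul_le_mul_of_nonneg_right hk8
        (mul_nonneg ht.le (mul_nonneg hApos.le hBpos.le))
      linarith
    · -- squared distance exactly 4: a nearest-neighbor pair in one coordinate
      have hprod : (1 + α ^ 2 * (‖y1‖ ^ 2 + ‖y2‖ ^ 2)) *
          (1 + α ^ 2 * (‖z1‖ ^ 2 + ‖z2‖ ^ 2))
          ≤ (1 + α ^ 2 * (Eng p + Eng q)) * (1 + α ^ 2 * (Eng p + EngS q)) := by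
        rcases hcase with ⟨e1, e2⟩ | ⟨e1, e2⟩
        · -- neighbors in the first coordinate, y2 = z2
          have hyz2 : y2 = z2 := hk2e.mp e2
          have h4 : ‖y1 - z1‖ ^ 2 = 4 := by rw [hd1, e1]; norm_num
          rcases neighbor_energy hp hy1 hz1 h4 with ⟨u, v⟩ | ⟨u, v⟩
          · have hD2B : 1 + α ^ 2 * (‖z1‖ ^ 2 + ‖z2‖ ^ 2)
                ≤ 1 + α ^ 2 * (Eng p + EngS q) := by
              have hsum : ‖z1‖ ^ 2 + ‖z2‖ ^ 2 ≤ Eng p + EngS q := by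
                linarith
              have := mul_le_mul_of_nonneg_left hsum ht.le; linarith
            exact mul_le_mul hD1A hD2B hD2pos.le hApos.le
          · have hD1B : 1 + α ^ 2 * (‖y1‖ ^ 2 + ‖y2‖ ^ 2)
                ≤ 1 + α ^ 2 * (Eng p + EngS q) := by
              have hb2' : ‖y2‖ ^ 2 ≤ Eng q := hb2
              have hsum : ‖y1‖ ^ 2 + ‖y2‖ ^ 2 ≤ Eng p + EngS q := by
                linarith
              have := mul_le_mul_of_nonneg_left hsum ht.le; linarith
            calc (1 + α ^ 2 * (‖y1‖ ^ 2 + ‖y2‖ ^ 2)) *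
                (1 + α ^ 2 * (‖z1‖ ^ 2 + ‖z2‖ ^ 2))
                ≤ (1 + α ^ 2 * (Eng p + EngS q)) * (1 + α ^ 2 * (Eng p + Eng q)) :=
                  mul_le_mul hD1B hD2A hD2pos.le hBpos.le
              _ = (1 + α ^ 2 * (Eng p + Eng q)) * (1 + α ^ 2 * (Eng p + EngS q)) := by ring
        · -- neighbors in the second coordinate, y1 = z1
          have h4 : ‖y2 - z2‖ ^ 2 = 4 := by rw [hd2, e2]; norm_num
          rcases neighbor_energy hq hy2 hz2 h4 with ⟨u, v⟩ | ⟨u, v⟩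
          · have hD2B : 1 + α ^ 2 * (‖z1‖ ^ 2 + ‖z2‖ ^ 2)
                ≤ 1 + α ^ 2 * (Eng p + EngS q) := by
              have hsum : ‖z1‖ ^ 2 + ‖z2‖ ^ 2 ≤ Eng p + EngS q := by
                linarith
              have := mul_le_mul_of_nonneg_left hsum ht.le; linarith
            exact mul_le_mul hD1A hD2B hD2pos.le hApos.le
          · have hD1B : 1 + α ^ 2 * (‖y1‖ ^ 2 + ‖y2‖ ^ 2)
                ≤ 1 + α ^ 2 * (Eng p + EngS q) := by
              have hsum : ‖y1‖ ^ 2 + ‖y2‖ ^ 2 ≤ Eng p + EngS q := by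
                linarith
              have := mul_le_mul_of_nonneg_left hsum ht.le; linarith
            calc (1 + α ^ 2 * (‖y1‖ ^ 2 + ‖y2‖ ^ 2)) *
                (1 + α ^ 2 * (‖z1‖ ^ 2 + ‖z2‖ ^ 2))
                ≤ (1 + α ^ 2 * (Eng p + EngS q)) * (1 + α ^ 2 * (Eng p + Eng q)) :=
                  mul_le_mul hD1B hD2A hD2pos.le hBpos.le
              _ = (1 + α ^ 2 * (Eng p + Eng q)) * (1 + α ^ 2 * (Eng p + EngS q)) := by ring
      have hk4 : 4 * (k1:ℝ) + 4 * (k2:ℝ) = 4 := by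
        rcases hcase with ⟨e1, e2⟩ | ⟨e1, e2⟩ <;> rw [e1, e2] <;> norm_num
      have d1 := mul_le_mul_of_nonneg_left hprod (by positivity : (0:ℝ) ≤ 4 * α ^ 2)
      rw [hk4]
      linarith
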